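/- Let η > 0, c ≥ 0 and a_{ij} ≥ 0 with a_{ij} ≤ e^{-|i-j|} and row/column sums bounded by η. Suppose u : ℤ^d → [0,∞) satisfies, for some nonnegative data b_i, the iterated bound u_i ≤ ∑_{n=0}^∞ c^{-n} ∑_{j∈ℤ^d} (a^n)_{ji} b_j with c > η and b_j ≤ R(|j|^ρ + 1). Then u_i ≤ C(R,ρ,d,η,c) (1 + |i|^ρ) for all i. -/

import Mathlib

open scoped BigOperators ENNReal

/-- ℓ¹ distance on ℤ^d. -/
def l1dist {d : ℕ} (i j : Fin d → ℤ) : ℕ := ∑ k, (i k - j k).natAbs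
/-- ℓ¹ norm on ℤ^d. -/
def l1norm {d : ℕ} (j : Fin d → ℤ) : ℕ := ∑ k, (j k).natAbs

lemma l1dist_eq {d : ℕ} (i j : Fin d → ℤ) : l1dist i j = l1norm (i - j) := rfl

lemma l1norm_triangle {d : ℕ} (k i : Fin d → ℤ) :
    (l1norm k : ℝ) ≤ (l1norm i : ℝ) + (l1dist k i : ℝ) := by
  rw [l1dist_eq]
  push_cast [l1norm]
  rw [← Finset.sum_add_distrib]
  apply Finset.sum_le_sum
  intro t _
  have : (k t).natAbs ≤ (i t).natAbs + (k t - i t).natAbs := by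
    have := Int.natAbs_add_le (i t) (k t - i t)
    simpa using this
  exact_mod_cast this

lemma summable_pi_pow {d : ℕ} {r : ℝ} (hr0 : 0 ≤ r) (hr1 : r < 1) :
    Summable (fun z : Fin d → ℤ => ∏ k, r ^ (z k).natAbs) := by
  induction d with
  | zero => exact Summable.of_finite
  | succ n ih =>
      have hZ : Summable (fun m : ℤ => r ^ m.natAbs) := by
        apply Summable.of_nat_of_neg
        · simpa using summable_geometric_of_lt_one hr0 hr1
        · simpa using summable_geometric_of_lt_one hr0 hr1
      have hprod : Summable (fun p : ℤ × (Fin n → ℤ) =>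
          (r ^ p.1.natAbs) * ∏ k, r ^ (p.2 k).natAbs) := by
        apply Summable.mul_of_nonneg hZ ih
        · intro m; positivity
        · intro z; exact Finset.prod_nonneg fun k _ => by positivity
      rw [← (Fin.consEquiv (fun _ => ℤ)).summable_iff]
      convert hprod using 1
      funext p
      simp only [Function.comp]
      rw [Fin.prod_univ_succ]
      simp [Fin.consEquiv]

lemma rpow_le_exp_half (ρ : ℝ) (hρ : 0 < ρ) :
    ∃ Cρ : ℝ, 0 < Cρ ∧ ∀ x : ℝ, 0 ≤ x → x ^ ρ ≤ Cρ * Real.exp (x / 2) := by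
  set m := ⌈ρ⌉₊ with hm
  refine ⟨(m.factorial : ℝ) * 2 ^ m + 1, by positivity, ?_⟩
  intro x hx
  have hexp1 : (1:ℝ) ≤ Real.exp (x / 2) := Real.one_le_exp (by linarith)
  rcases le_or_gt x 1 with h1 | h1
  · have : x ^ ρ ≤ 1 := Real.rpow_le_one hx h1 hρ.le
    have hC1 : (1:ℝ) ≤ (m.factorial : ℝ) * 2 ^ m + 1 := by
      have h2m : (1:ℝ) ≤ 2 ^ m := one_le_pow₀ (by norm_num)
      have hf : (1:ℝ) ≤ m.factorial := by
        exact_mod_cast Nat.one_le_iff_ne_zero.mpr (Nat.factorial_ne_zero m)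
      nlinarith
    nlinarith [mul_le_mul hC1 hexp1 zero_le_one (le_trans zero_le_one hC1)]
  · have hx1 : (1:ℝ) ≤ x := h1.le
    have h2 : x ^ ρ ≤ x ^ (m : ℝ) :=
      Real.rpow_le_rpow_of_exponent_le hx1 (Nat.le_ceil ρ)
    rw [Real.rpow_natCast] at h2
    have h3 : (x/2) ^ m / m.factorial ≤ Real.exp (x / 2) := by
      calc (x/2) ^ m / m.factorial
          ≤ ∑ i ∈ Finset.range (m+1), (x/2) ^ i / i.factorial := by
            exact Finset.single_le_sum (f := fun i => (x/2:ℝ)^i / i.factorial)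
              (fun i _ => by positivity) (Finset.self_mem_range_succ m)
        _ ≤ Real.exp (x/2) := Real.sum_le_exp_of_nonneg (by linarith) _
    have h4 : x ^ m = 2 ^ m * (x/2) ^ m := by
      rw [← mul_pow]; ring_nf
    have hfac : (0:ℝ) < m.factorial := by positivity
    calc x ^ ρ ≤ x ^ m := h2
      _ = 2 ^ m * (x/2) ^ m := h4
      _ ≤ 2 ^ m * (m.factorial * Real.exp (x/2)) := by
          have := (div_le_iff₀ hfac).mp h3
          nlinarith [pow_pos (by norm_num : (0:ℝ) < 2) m]
      _ ≤ ((m.factorial : ℝ) * 2 ^ m + 1) * Real.exp (x/2) := by nlinarith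

lemma exp_l1_prod {d : ℕ} (z : Fin d → ℤ) (s : ℝ) :
    Real.exp (-(l1norm z : ℝ) * s) = ∏ k, (Real.exp (-s)) ^ (z k).natAbs := by
  have : (-(l1norm z : ℝ) * s) = ∑ k, (-s) * (z k).natAbs := by
    simp only [l1norm]
    push_cast
    rw [neg_mul, Finset.sum_mul, ← Finset.sum_neg_distrib]
    exact Finset.sum_congr rfl fun k _ => by ring
  rw [this, Real.exp_sum]
  apply Finset.prod_congr rfl
  intro k _
  rw [mul_comm, Real.exp_nat_mul]

lemma summable_exp_l1 {d : ℕ} : Summable (fun z : Fin d → ℤ => Real.exp (-(l1norm z : ℝ))) := by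
  have := summable_pi_pow (d := d) (r := Real.exp (-1)) (Real.exp_nonneg _)
    (Real.exp_lt_one_iff.mpr (by norm_num))
  apply this.congr
  intro z
  rw [← exp_l1_prod z 1]
  norm_num

lemma summable_exp_l1_rpow {d : ℕ} (ρ : ℝ) (hρ : 0 < ρ) :
    Summable (fun z : Fin d → ℤ => Real.exp (-(l1norm z : ℝ)) * (l1norm z : ℝ) ^ ρ) := by
  obtain ⟨Cρ, hCρ, hC⟩ := rpow_le_exp_half ρ hρ
  have hs : Summable (fun z : Fin d → ℤ => Cρ * ∏ k, (Real.exp (-(1/2))) ^ (z k).natAbs) := by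
    exact (summable_pi_pow (Real.exp_nonneg _) (Real.exp_lt_one_iff.mpr (by norm_num))).mul_left _
  apply Summable.of_nonneg_of_le _ _ hs
  · intro z; positivity
  · intro z
    have h1 : (l1norm z : ℝ) ^ ρ ≤ Cρ * Real.exp ((l1norm z : ℝ) / 2) :=
      hC _ (Nat.cast_nonneg _)
    have h2 : Real.exp (-(l1norm z : ℝ)) * ((l1norm z : ℝ)) ^ ρ
        ≤ Cρ * (Real.exp (-(l1norm z : ℝ)) * Real.exp ((l1norm z : ℝ)/2)) := by
      nlinarith [Real.exp_pos (-(l1norm z : ℝ))]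
    rw [← Real.exp_add] at h2
    calc Real.exp (-(l1norm z : ℝ)) * ((l1norm z : ℝ)) ^ ρ
        ≤ Cρ * Real.exp (-(l1norm z:ℝ) + (l1norm z:ℝ)/2) := h2
      _ = Cρ * ∏ k, (Real.exp (-(1/2))) ^ (z k).natAbs := by
          rw [← exp_l1_prod z (1/2)]
          ring_nf

/-- n-fold matrix power of a kernel on ℤ^d. -/
noncomputable def matpow {ι : Type*} [DecidableEq ι] (M : ι → ι → ℝ) : ℕ → ι → ι → ℝ
  | 0 => fun i j => if i = j then 1 else 0
  | n + 1 => fun i j => ∑' k, matpow M n i k * M k j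

noncomputable def epow {ι : Type*} [DecidableEq ι] (A : ι → ι → ℝ≥0∞) : ℕ → ι → ι → ℝ≥0∞
  | 0 => fun i j => if i = j then 1 else 0
  | n + 1 => fun i j => ∑' k, epow A n i k * A k j

lemma epow_colsum {ι : Type*} [DecidableEq ι] (A : ι → ι → ℝ≥0∞) {t : ℝ≥0∞}
    (hA : ∀ i, ∑' k, A k i ≤ t) : ∀ (n : ℕ) (i : ι), ∑' j, epow A n j i ≤ t ^ n := by
  intro n
  induction n with
  | zero =>
      intro i
      simp only [epow, pow_zero]
      rw [tsum_eq_single i (fun j hj => by simp [hj])]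
      simp
  | succ n ih =>
      intro i
      calc ∑' j, epow A (n+1) j i = ∑' j, ∑' k, epow A n j k * A k i := rfl
        _ = ∑' k, ∑' j, epow A n j k * A k i := ENNReal.tsum_comm
        _ = ∑' k, (∑' j, epow A n j k) * A k i := by
            exact tsum_congr fun k => ENNReal.tsum_mul_right
        _ ≤ ∑' k, t ^ n * A k i := ENNReal.tsum_le_tsum fun k =>
            mul_le_mul_left (ih k) _
        _ = t ^ n * ∑' k, A k i := ENNReal.tsum_mul_left
        _ ≤ t ^ n * t := mul_le_mul_right (hA i) _
        _ = t ^ (n+1) := (pow_succ t n).symm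

lemma epow_ne_top {ι : Type*} [DecidableEq ι] (A : ι → ι → ℝ≥0∞) {t : ℝ≥0∞}
    (hA : ∀ i, ∑' k, A k i ≤ t) (ht : t ≠ ⊤) (n : ℕ) (j i : ι) : epow A n j i ≠ ⊤ := by
  have h1 : epow A n j i ≤ t ^ n := le_trans (ENNReal.le_tsum j) (epow_colsum A hA n i)
  exact ne_top_of_le_ne_top (ENNReal.pow_ne_top ht) h1

lemma epow_weight {ι : Type*} [DecidableEq ι] (A : ι → ι → ℝ≥0∞) (W : ι → ℝ≥0∞) {s : ℝ≥0∞}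
    (hW : ∀ i, ∑' k, A k i * W k ≤ s * W i) : ∀ (n : ℕ) (i : ι),
    ∑' j, epow A n j i * W j ≤ s ^ n * W i := by
  intro n
  induction n with
  | zero =>
      intro i
      simp only [epow, pow_zero, one_mul]
      rw [tsum_eq_single i (fun j hj => by simp [hj])]
      simp
  | succ n ih =>
      intro i
      calc ∑' j, epow A (n+1) j i * W j
          = ∑' j, (∑' k, epow A n j k * A k i) * W j := rfl
        _ = ∑' j, ∑' k, epow A n j k * A k i * W j := by
            exact tsum_congr fun j => ENNReal.tsum_mul_right.symm
        _ = ∑' k, ∑' j, epow A n j k * A k i * W j := ENNReal.tsum_comm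
        _ = ∑' k, (∑' j, epow A n j k * W j) * A k i := by
            refine tsum_congr fun k => ?_
            rw [← ENNReal.tsum_mul_right]
            exact tsum_congr fun j => by ring
        _ ≤ ∑' k, (s ^ n * W k) * A k i := ENNReal.tsum_le_tsum fun k =>
            mul_le_mul_left (ih k) _
        _ = s ^ n * ∑' k, A k i * W k := by
            rw [← ENNReal.tsum_mul_left]
            exact tsum_congr fun k => by ring
        _ ≤ s ^ n * (s * W i) := mul_le_mul_right (hW i) _
        _ = s ^ (n+1) * W i := by rw [pow_succ]; ring

lemma matpow_eq_epow {ι : Type*} [DecidableEq ι] (a : ι → ι → ℝ) (ha : ∀ i j, 0 ≤ a i j)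
    {t : ℝ≥0∞} (ht : t ≠ ⊤)
    (hA : ∀ i, ∑' k, ENNReal.ofReal (a k i) ≤ t) (n : ℕ) (j i : ι) :
    matpow a n j i = (epow (fun p q => ENNReal.ofReal (a p q)) n j i).toReal := by
  induction n generalizing j i with
  | zero =>
      simp only [matpow, epow]
      split <;> simp
  | succ n ih =>
      have hne : ∀ k, epow (fun p q => ENNReal.ofReal (a p q)) n j k *
          ENNReal.ofReal (a k i) ≠ ⊤ := fun k =>
        ENNReal.mul_ne_top (epow_ne_top _ hA ht n j k) ENNReal.ofReal_ne_top
      calc matpow a (n+1) j i = ∑' k, matpow a n j k * a k i := rfl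
        _ = ∑' k, (epow (fun p q => ENNReal.ofReal (a p q)) n j k *
              ENNReal.ofReal (a k i)).toReal := by
            refine tsum_congr fun k => ?_
            rw [ENNReal.toReal_mul, ENNReal.toReal_ofReal (ha k i), ih]
        _ = (∑' k, epow (fun p q => ENNReal.ofReal (a p q)) n j k *
              ENNReal.ofReal (a k i)).toReal := (ENNReal.tsum_toReal_eq hne).symm
        _ = (epow (fun p q => ENNReal.ofReal (a p q)) (n+1) j i).toReal := rfl

lemma rpow_add_le (ρ : ℝ) (hρ : 0 < ρ) (T : ℝ) (hT : 1 < T) {x y : ℝ} (hx : 0 ≤ x) (hy : 0 ≤ y) :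
    (x + y) ^ ρ ≤ T ^ ρ * x ^ ρ + (T/(T-1)) ^ ρ * y ^ ρ := by
  have hT0 : (0:ℝ) < T := by linarith
  have hT1 : (0:ℝ) < T - 1 := by linarith
  rcases le_or_gt y ((T-1)*x) with h | h
  · have h1 : x + y ≤ T * x := by nlinarith
    have h2 := Real.rpow_le_rpow (by linarith) h1 hρ.le
    rw [Real.mul_rpow hT0.le hx] at h2
    have h3 : 0 ≤ (T/(T-1)) ^ ρ * y ^ ρ :=
      mul_nonneg (Real.rpow_nonneg (by positivity) ρ) (Real.rpow_nonneg hy ρ)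
    linarith
  · have h1 : x + y ≤ (T/(T-1)) * y := by
      rw [div_mul_eq_mul_div, le_div_iff₀ hT1]; nlinarith
    have h2 := Real.rpow_le_rpow (by linarith) h1 hρ.le
    rw [Real.mul_rpow (by positivity) hy] at h2
    have h3 : 0 ≤ T ^ ρ * x ^ ρ :=
      mul_nonneg (Real.rpow_nonneg hT0.le ρ) (Real.rpow_nonneg hx ρ)
    linarith

theorem stmt8 {d : ℕ} (hd : 1 ≤ d) (R ρ η c : ℝ) (hR : 0 < R) (hρ : 0 < ρ)
    (hη : 0 < η) (hc : η < c) :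
    ∃ C : ℝ, 0 < C ∧
      ∀ (a : (Fin d → ℤ) → (Fin d → ℤ) → ℝ) (b u : (Fin d → ℤ) → ℝ),
        (∀ i j, 0 ≤ a i j) → (∀ i j, a i j ≤ Real.exp (-(l1dist i j : ℝ))) →
        (∀ i, ∑' j, a i j ≤ η) → (∀ j, ∑' i, a i j ≤ η) →
        (∀ j, 0 ≤ b j) → (∀ j, b j ≤ R * ((l1norm j : ℝ) ^ ρ + 1)) →
        (∀ i, 0 ≤ u i) →
        (∀ i, u i ≤ ∑' n : ℕ, (c ^ n)⁻¹ * ∑' j, matpow a n j i * b j) →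
        ∀ i, u i ≤ C * (1 + (l1norm i : ℝ) ^ ρ) := by
  -- constants
  set η' : ℝ := (η + c) / 2 with hη'def
  have hη'1 : η < η' := by simp only [hη'def]; linarith
  have hη'2 : η' < c := by simp only [hη'def]; linarith
  have hη'0 : 0 < η' := lt_trans hη hη'1
  have hq1 : 1 < η' / η := (one_lt_div hη).mpr hη'1
  set T : ℝ := (η' / η) ^ ρ⁻¹ with hTdef
  have hT : 1 < T := by
    rw [hTdef]
    rw [Real.one_lt_rpow_iff_of_pos (div_pos hη'0 hη)]
    exact Or.inl ⟨hq1, inv_pos.mpr hρ⟩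
  have hTρ : T ^ ρ = η' / η := by
    rw [hTdef, ← Real.rpow_mul (div_pos hη'0 hη).le, inv_mul_cancel₀ hρ.ne', Real.rpow_one]
  set CT : ℝ := (T / (T - 1)) ^ ρ with hCTdef
  have hCT0 : 0 ≤ CT := Real.rpow_nonneg (div_nonneg (by linarith) (by linarith)) ρ
  set M : ℝ := ∑' z : Fin d → ℤ, Real.exp (-(l1norm z : ℝ)) * (l1norm z : ℝ) ^ ρ with hMdef
  have hMsum := summable_exp_l1_rpow (d := d) ρ hρ
  have hM0 : 0 ≤ M := tsum_nonneg fun z => mul_nonneg (Real.exp_nonneg _) (Real.rpow_nonneg (Nat.cast_nonneg _) _)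
  set B : ℝ := max 1 (CT * M / (η' - η)) with hBdef
  have hB1 : (1:ℝ) ≤ B := le_max_left _ _
  have hB0 : (0:ℝ) < B := lt_of_lt_of_le one_pos hB1
  have hBkey : CT * M + η * B ≤ η' * B := by
    have h1 : CT * M / (η' - η) ≤ B := le_max_right _ _
    have h2 : CT * M ≤ (η' - η) * B := by
      rw [div_le_iff₀ (by linarith)] at h1; linarith [h1]
    nlinarith
  have hc0 : (0:ℝ) < c := lt_trans hη hc
  clear_value η' T CT M B
  have hrc : 0 ≤ η' / c ∧ η' / c < 1 :=
    ⟨div_nonneg hη'0.le hc0.le, (div_lt_one hc0).mpr hη'2⟩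
  refine ⟨R * B * (1 - η' / c)⁻¹, mul_pos (mul_pos hR hB0)
    (inv_pos.mpr (by linarith [hrc.2])), ?_⟩
  intro a b u ha hae harow hacol hb0 hbR hu0 hiter i
  -- notation
  set A : (Fin d → ℤ) → (Fin d → ℤ) → ℝ≥0∞ := fun p q => ENNReal.ofReal (a p q) with hAdef
  set w : (Fin d → ℤ) → ℝ := fun j => (l1norm j : ℝ) ^ ρ + B with hwdef
  have hw0 : ∀ j, 0 < w j := fun j => by
    have := Real.rpow_nonneg (Nat.cast_nonneg (l1norm j) : (0:ℝ) ≤ l1norm j) ρ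
    simp only [hwdef]; linarith
  set W : (Fin d → ℤ) → ℝ≥0∞ := fun j => ENNReal.ofReal (w j) with hWdef
  clear_value w W
  -- summability facts
  have hsum_exp : ∀ i : Fin d → ℤ, Summable (fun k : Fin d → ℤ => Real.exp (-(l1dist k i : ℝ))) := by
    intro i
    have h := (Equiv.subRight i).summable_iff.mpr (summable_exp_l1 (d := d))
    apply h.congr
    intro k
    simp [Function.comp, l1dist_eq]
  have hsum_exp_rpow : ∀ i : Fin d → ℤ,
      Summable (fun k : Fin d → ℤ => Real.exp (-(l1dist k i : ℝ)) * (l1dist k i : ℝ) ^ ρ) := by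
    intro i
    have h := (Equiv.subRight i).summable_iff.mpr hMsum
    apply h.congr
    intro k
    simp [Function.comp, l1dist_eq]
  have htrans : ∀ i : Fin d → ℤ,
      ∑' k, Real.exp (-(l1dist k i : ℝ)) * (l1dist k i : ℝ) ^ ρ = M := by
    intro i
    rw [hMdef, ← (Equiv.subRight i).tsum_eq
      (fun z => Real.exp (-(l1norm z : ℝ)) * (l1norm z : ℝ) ^ ρ)]
    exact tsum_congr fun k => by simp [l1dist_eq]
  have hcol_sum : ∀ i, Summable (fun k => a k i) := fun i =>
    Summable.of_nonneg_of_le (fun k => ha k i) (fun k => hae k i) (hsum_exp i)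
  have hAcol : ∀ i, ∑' k, A k i ≤ ENNReal.ofReal η := by
    intro i
    rw [hAdef, ← ENNReal.ofReal_tsum_of_nonneg (fun k => ha k i) (hcol_sum i)]
    exact ENNReal.ofReal_le_ofReal (hacol i)
  -- one-step weight bound
  have hWstep : ∀ i, ∑' k, A k i * W k ≤ ENNReal.ofReal η' * W i := by
    intro i
    have hpt : ∀ k, a k i * w k ≤
        ((T ^ ρ * (l1norm i : ℝ) ^ ρ + B) * a k i
          + CT * (Real.exp (-(l1dist k i : ℝ)) * (l1dist k i : ℝ) ^ ρ)) := by
      intro k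
      have h1 : (l1norm k : ℝ) ^ ρ ≤ T ^ ρ * (l1norm i : ℝ) ^ ρ + CT * (l1dist k i : ℝ) ^ ρ := by
        calc (l1norm k : ℝ) ^ ρ
            ≤ ((l1norm i : ℝ) + (l1dist k i : ℝ)) ^ ρ :=
              Real.rpow_le_rpow (Nat.cast_nonneg _) (l1norm_triangle k i) hρ.le
          _ ≤ T ^ ρ * (l1norm i : ℝ) ^ ρ + CT * (l1dist k i : ℝ) ^ ρ := by
              rw [hCTdef]
              exact rpow_add_le ρ hρ T hT (Nat.cast_nonneg _) (Nat.cast_nonneg _)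
      have h2 : a k i * (l1dist k i : ℝ) ^ ρ
          ≤ Real.exp (-(l1dist k i : ℝ)) * (l1dist k i : ℝ) ^ ρ :=
        mul_le_mul_of_nonneg_right (hae k i) (Real.rpow_nonneg (Nat.cast_nonneg _) _)
      have h3 : a k i * w k ≤ a k i * (T ^ ρ * (l1norm i : ℝ) ^ ρ + CT * (l1dist k i : ℝ) ^ ρ + B) := by
        apply mul_le_mul_of_nonneg_left _ (ha k i)
        simp only [hwdef]; linarith
      have h4 : a k i * (T ^ ρ * (l1norm i : ℝ) ^ ρ + CT * (l1dist k i : ℝ) ^ ρ + B)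
          = (T ^ ρ * (l1norm i : ℝ) ^ ρ + B) * a k i + CT * (a k i * (l1dist k i : ℝ) ^ ρ) := by
        ring
      nlinarith [mul_le_mul_of_nonneg_left h2 hCT0]
    -- summability of the two pieces
    have hf1 : Summable (fun k => (T ^ ρ * (l1norm i : ℝ) ^ ρ + B) * a k i) :=
      (hcol_sum i).mul_left _
    have hf2 : Summable (fun k => CT * (Real.exp (-(l1dist k i : ℝ)) * (l1dist k i : ℝ) ^ ρ)) :=
      (hsum_exp_rpow i).mul_left _
    have hfs := hf1.add hf2
    have hTpi0 : 0 ≤ T ^ ρ * (l1norm i : ℝ) ^ ρ + B :=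
      le_trans hB0.le (le_add_of_nonneg_left
        (mul_nonneg (Real.rpow_nonneg (by linarith : (0:ℝ) ≤ T) _)
          (Real.rpow_nonneg (Nat.cast_nonneg _) _)))
    calc ∑' k, A k i * W k = ∑' k, ENNReal.ofReal (a k i * w k) := by
          simp only [hWdef]
          exact tsum_congr fun k => (ENNReal.ofReal_mul (ha k i)).symm
      _ ≤ ∑' k, ENNReal.ofReal ((T ^ ρ * (l1norm i : ℝ) ^ ρ + B) * a k i
            + CT * (Real.exp (-(l1dist k i : ℝ)) * (l1dist k i : ℝ) ^ ρ)) :=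
          ENNReal.tsum_le_tsum fun k => ENNReal.ofReal_le_ofReal (hpt k)
      _ = ENNReal.ofReal (∑' k, ((T ^ ρ * (l1norm i : ℝ) ^ ρ + B) * a k i
            + CT * (Real.exp (-(l1dist k i : ℝ)) * (l1dist k i : ℝ) ^ ρ))) := by
          rw [ENNReal.ofReal_tsum_of_nonneg _ hfs]
          intro k
          have := mul_nonneg (ha k i) (hw0 k).le
          have h5 := hpt k
          nlinarith [mul_nonneg (ha k i) (hw0 k).le]
      _ ≤ ENNReal.ofReal (η' * w i) := by
          apply ENNReal.ofReal_le_ofReal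
          rw [hf1.tsum_add hf2, tsum_mul_left, tsum_mul_left, htrans i]
          have hcol := hacol i
          have h6 : (T ^ ρ * (l1norm i : ℝ) ^ ρ + B) * (∑' k, a k i)
              ≤ (T ^ ρ * (l1norm i : ℝ) ^ ρ + B) * η :=
            mul_le_mul_of_nonneg_left hcol hTpi0
          have h7 : T ^ ρ * η = η' := by
            rw [hTρ]; field_simp
          have hpi0 : 0 ≤ (l1norm i : ℝ) ^ ρ := Real.rpow_nonneg (Nat.cast_nonneg _) _
          simp only [hwdef]
          nlinarith
      _ = ENNReal.ofReal η' * W i := by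
          rw [hWdef, ← ENNReal.ofReal_mul hη'0.le]
  -- per-n bound
  have hmp : ∀ n j, matpow a n j i = (epow A n j i).toReal := fun n j =>
    matpow_eq_epow a ha ENNReal.ofReal_ne_top hAcol n j i
  have hSn : ∀ n : ℕ, ∑' j, matpow a n j i * b j ≤ R * η' ^ n * w i := by
    intro n
    have hne : ∀ j, epow A n j i * ENNReal.ofReal (b j) ≠ ⊤ := fun j =>
      ENNReal.mul_ne_top (epow_ne_top A hAcol ENNReal.ofReal_ne_top n j i) ENNReal.ofReal_ne_top
    have hEb : ∑' j, epow A n j i * ENNReal.ofReal (b j)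
        ≤ ENNReal.ofReal R * ((ENNReal.ofReal η') ^ n * W i) := by
      calc ∑' j, epow A n j i * ENNReal.ofReal (b j)
          ≤ ∑' j, epow A n j i * (ENNReal.ofReal R * W j) := by
            apply ENNReal.tsum_le_tsum
            intro j
            apply mul_le_mul_right
            rw [hWdef, ← ENNReal.ofReal_mul hR.le]
            apply ENNReal.ofReal_le_ofReal
            calc b j ≤ R * ((l1norm j : ℝ) ^ ρ + 1) := hbR j
              _ ≤ R * w j := by
                  apply mul_le_mul_of_nonneg_left _ hR.le
                  simp only [hwdef]; linarith
        _ = ENNReal.ofReal R * ∑' j, epow A n j i * W j := by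
            rw [← ENNReal.tsum_mul_left]
            exact tsum_congr fun j => by ring
        _ ≤ ENNReal.ofReal R * ((ENNReal.ofReal η') ^ n * W i) := by
            apply mul_le_mul_right
            apply epow_weight A W _ n i
            intro i'
            exact hWstep i'
    have hWtop : W i ≠ ⊤ := by simp only [hWdef]; exact ENNReal.ofReal_ne_top
    have hrhs_ne : ENNReal.ofReal R * ((ENNReal.ofReal η') ^ n * W i) ≠ ⊤ :=
      ENNReal.mul_ne_top ENNReal.ofReal_ne_top
        (ENNReal.mul_ne_top (ENNReal.pow_ne_top ENNReal.ofReal_ne_top) hWtop)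
    calc ∑' j, matpow a n j i * b j
        = (∑' j, epow A n j i * ENNReal.ofReal (b j)).toReal := by
          rw [ENNReal.tsum_toReal_eq hne]
          exact tsum_congr fun j => by
            rw [hmp n j, ENNReal.toReal_mul, ENNReal.toReal_ofReal (hb0 j)]
      _ ≤ (ENNReal.ofReal R * ((ENNReal.ofReal η') ^ n * W i)).toReal :=
          ENNReal.toReal_mono hrhs_ne hEb
      _ = R * (η' ^ n * w i) := by
          simp only [hWdef]
          rw [ENNReal.toReal_mul, ENNReal.toReal_mul, ENNReal.toReal_pow,
            ENNReal.toReal_ofReal hR.le, ENNReal.toReal_ofReal hη'0.le,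
            ENNReal.toReal_ofReal (hw0 i).le]
      _ = R * η' ^ n * w i := by ring
  -- sum over n
  have hmp_nonneg : ∀ n j, 0 ≤ matpow a n j i := fun n j => by
    rw [hmp n j]; exact ENNReal.toReal_nonneg
  have hterm_nonneg : ∀ n : ℕ, 0 ≤ (c ^ n)⁻¹ * ∑' j, matpow a n j i * b j := by
    intro n
    apply mul_nonneg (inv_nonneg.mpr (pow_nonneg hc0.le n))
    exact tsum_nonneg fun j => mul_nonneg (hmp_nonneg n j) (hb0 j)
  have hg : Summable (fun n : ℕ => (η' / c) ^ n * (R * w i)) :=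
    (summable_geometric_of_lt_one hrc.1 hrc.2).mul_right _
  have hptn : ∀ n : ℕ, (c ^ n)⁻¹ * ∑' j, matpow a n j i * b j ≤ (η' / c) ^ n * (R * w i) := by
    intro n
    have h1 := hSn n
    have h2 : (c ^ n)⁻¹ * ∑' j, matpow a n j i * b j ≤ (c ^ n)⁻¹ * (R * η' ^ n * w i) :=
      mul_le_mul_of_nonneg_left h1 (inv_nonneg.mpr (pow_nonneg hc0.le n))
    calc (c ^ n)⁻¹ * ∑' j, matpow a n j i * b j ≤ (c ^ n)⁻¹ * (R * η' ^ n * w i) := h2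
      _ = (η' / c) ^ n * (R * w i) := by
          have hpow : (η' / c) ^ n = η' ^ n * (c ^ n)⁻¹ := by
            rw [div_pow, div_eq_mul_inv]
          rw [hpow]; ring
  have hL : Summable (fun n : ℕ => (c ^ n)⁻¹ * ∑' j, matpow a n j i * b j) :=
    Summable.of_nonneg_of_le hterm_nonneg hptn hg
  have hfinal : u i ≤ (1 - η' / c)⁻¹ * (R * w i) := by
    calc u i ≤ ∑' n : ℕ, (c ^ n)⁻¹ * ∑' j, matpow a n j i * b j := hiter i
      _ ≤ ∑' n : ℕ, (η' / c) ^ n * (R * w i) := Summable.tsum_le_tsum hptn hL hg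
      _ = (1 - η' / c)⁻¹ * (R * w i) := by
          rw [tsum_mul_right, tsum_geometric_of_lt_one hrc.1 hrc.2]
  calc u i ≤ (1 - η' / c)⁻¹ * (R * w i) := hfinal
    _ ≤ R * B * (1 - η' / c)⁻¹ * (1 + (l1norm i : ℝ) ^ ρ) := by
        have hinv : 0 < (1 - η' / c)⁻¹ := inv_pos.mpr (by linarith [hrc.2])
        have hpi0 : 0 ≤ (l1norm i : ℝ) ^ ρ := Real.rpow_nonneg (Nat.cast_nonneg _) _
        have hwi : w i = (l1norm i : ℝ) ^ ρ + B := by rw [hwdef]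
        have hwle : w i ≤ B * (1 + (l1norm i : ℝ) ^ ρ) := by
          have h8 : (l1norm i : ℝ) ^ ρ ≤ B * (l1norm i : ℝ) ^ ρ :=
            le_mul_of_one_le_left hpi0 hB1
          rw [hwi, mul_add, mul_one]
          linarith
        calc (1 - η' / c)⁻¹ * (R * w i)
            ≤ (1 - η' / c)⁻¹ * (R * (B * (1 + (l1norm i : ℝ) ^ ρ))) :=
              mul_le_mul_of_nonneg_left (mul_le_mul_of_nonneg_left hwle hR.le) hinv.le
          _ = R * B * (1 - η' / c)⁻¹ * (1 + (l1norm i : ℝ) ^ ρ) := by ring
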